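/- If f : [0,1] → ℝ is continuous, then for every n > 1 and x ∈ [0,1], |R_n(f;x) − f(x)| ≤ (31/27) ω(n^{−1/2}), where ω is the modulus of continuity of f. -/

import Mathlib

/-- Generalized rising factorial with increment `h`: `x^(m,h) = x(x+h)···(x+(m-1)h)`. -/
noncomputable def rfac (x h : ℝ) (m : ℕ) : ℝ := ∏ i ∈ Finset.range m, (x + i * h)

/-- Pólya urn probability `p_{n,k}^{a,b,c}`. -/
noncomputable def polyaProb (a b c : ℝ) (n k : ℕ) : ℝ :=
  (n.choose k : ℝ) * rfac a c k * rfac b c (n - k) / rfac (a + b) c n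

/-- The operator `R_n(f;x)` with `c = -min{x,1-x}/(n-1)`. -/
noncomputable def Rop (n : ℕ) (f : ℝ → ℝ) (x : ℝ) : ℝ :=
  ∑ k ∈ Finset.range (n + 1),
    polyaProb x (1 - x) (-(min x (1 - x)) / ((n : ℝ) - 1)) n k * f ((k : ℝ) / n)

/-- Modulus of continuity of `f` on `[a,b]`. -/
noncomputable def modulus (f : ℝ → ℝ) (a b δ : ℝ) : ℝ :=
  sSup {d : ℝ | ∃ u ∈ Set.Icc a b, ∃ v ∈ Set.Icc a b, |u - v| ≤ δ ∧ d = |f u - f v|}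

lemma rfac_zero (x h : ℝ) : rfac x h 0 = 1 := by simp [rfac]

lemma rfac_succ (x h : ℝ) (m : ℕ) : rfac x h (m + 1) = rfac x h m * (x + m * h) :=
  Finset.prod_range_succ _ _

lemma rfac_shift (x h : ℝ) (m : ℕ) : rfac x h (m + 1) = x * rfac (x + h) h m := by
  unfold rfac
  rw [Finset.prod_range_succ']
  simp only [Nat.cast_zero, zero_mul, add_zero, Nat.cast_add, Nat.cast_one]
  rw [mul_comm]
  congr 1
  apply Finset.prod_congr rfl
  intro i _
  ring

lemma rfac_nonneg {x h : ℝ} {m : ℕ} (H : ∀ i, i < m → 0 ≤ x + i * h) : 0 ≤ rfac x h m :=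
  Finset.prod_nonneg fun i hi => H i (Finset.mem_range.mp hi)

lemma rfac_pos {x h : ℝ} {m : ℕ} (H : ∀ i, i < m → 0 < x + i * h) : 0 < rfac x h m :=
  Finset.prod_pos fun i hi => H i (Finset.mem_range.mp hi)

lemma vand (c : ℝ) : ∀ (n : ℕ) (a b : ℝ),
    ∑ k ∈ Finset.range (n + 1),
      (n.choose k : ℝ) * rfac a c k * rfac b c (n - k) = rfac (a + b) c n := by
  intro n
  induction n with
  | zero => intro a b; simp [rfac]
  | succ n ih =>
    intro a b
    rw [Finset.sum_range_succ']
    have h2 : ∀ k ∈ Finset.range (n + 1),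
        ((n+1).choose (k+1) : ℝ) * rfac a c (k+1) * rfac b c (n + 1 - (k+1))
        = (n.choose k : ℝ) * rfac a c k * rfac b c (n - k) * (a + k * c)
          + (n.choose (k+1) : ℝ) * rfac a c (k+1) * rfac b c (n - k) := by
      intro k _
      rw [Nat.choose_succ_succ']
      push_cast
      rw [rfac_succ a c k]
      ring
    rw [Finset.sum_congr rfl h2, Finset.sum_add_distrib]
    have h4 : ∀ k ∈ Finset.range (n + 1),
        (n.choose k : ℝ) * rfac a c k * rfac b c (n - k) * (b + (↑(n - k)) * c)
        = (n.choose k : ℝ) * rfac a c k * rfac b c (n + 1 - k) := by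
      intro k hk
      have hk' : k ≤ n := Nat.lt_succ_iff.mp (Finset.mem_range.mp hk)
      rw [show n + 1 - k = (n - k) + 1 by omega, rfac_succ]
      ring
    have h3 : (∑ k ∈ Finset.range (n + 1),
          (n.choose (k+1) : ℝ) * rfac a c (k+1) * rfac b c (n - k))
        + ((n+1).choose 0 : ℝ) * rfac a c 0 * rfac b c (n + 1 - 0)
        = ∑ k ∈ Finset.range (n + 1),
          (n.choose k : ℝ) * rfac a c k * rfac b c (n - k) * (b + (↑(n - k)) * c) := by
      rw [Finset.sum_range_succ]
      simp only [Nat.choose_succ_self, Nat.cast_zero, zero_mul, add_zero,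
        Nat.choose_zero_right, Nat.cast_one, one_mul, rfac_zero, Nat.sub_zero]
      rw [Finset.sum_congr rfl h4, Finset.sum_range_succ']
      simp only [Nat.succ_sub_succ, Nat.choose_zero_right, Nat.cast_one, one_mul,
        rfac_zero, Nat.sub_zero]
    rw [add_assoc, h3, ← Finset.sum_add_distrib]
    have h5 : ∀ k ∈ Finset.range (n + 1),
        (n.choose k : ℝ) * rfac a c k * rfac b c (n - k) * (a + k * c)
        + (n.choose k : ℝ) * rfac a c k * rfac b c (n - k) * (b + (↑(n - k)) * c)
        = ((a + b) + n * c) * ((n.choose k : ℝ) * rfac a c k * rfac b c (n - k)) := by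
      intro k hk
      have hk' : k ≤ n := Nat.lt_succ_iff.mp (Finset.mem_range.mp hk)
      have hcast : ((n - k : ℕ) : ℝ) = (n : ℝ) - k := Nat.cast_sub hk'
      rw [hcast]; ring
    rw [Finset.sum_congr rfl h5, ← Finset.mul_sum, ih, rfac_succ]
    ring

lemma cast_choose_succ (n k : ℕ) :
    ((k:ℝ) + 1) * (((n+1).choose (k+1) : ℕ) : ℝ) = ((n:ℝ) + 1) * ((n.choose k : ℕ) : ℝ) := by
  have h := Nat.add_one_mul_choose_eq n k
  have h2 : (((n+1) * n.choose k : ℕ) : ℝ) = (((n + 1).choose (k + 1) * (k + 1) : ℕ) : ℝ) := by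
    exact_mod_cast congrArg (fun t => ((t : ℕ) : ℝ)) h
  push_cast at h2
  linarith

lemma moment1 (c : ℝ) (n : ℕ) (a b : ℝ) :
    ∑ k ∈ Finset.range (n + 2),
      (k : ℝ) * ((n+1).choose k : ℝ) * rfac a c k * rfac b c (n + 1 - k)
      = ((n : ℝ) + 1) * a * rfac (a + c + b) c n := by
  rw [Finset.sum_range_succ']
  simp only [Nat.cast_zero, zero_mul, add_zero]
  have h1 : ∀ k ∈ Finset.range (n + 1),
      (((k + 1 : ℕ)) : ℝ) * ((n+1).choose (k+1) : ℝ) * rfac a c (k+1) * rfac b c (n + 1 - (k+1))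
      = ((n:ℝ) + 1) * a * ((n.choose k : ℝ) * rfac (a + c) c k * rfac b c (n - k)) := by
    intro k _
    have e : n + 1 - (k + 1) = n - k := by omega
    rw [e, rfac_shift a c k]
    have hc := cast_choose_succ n k
    push_cast at hc ⊢
    linear_combination (a * rfac (a + c) c k * rfac b c (n - k)) * hc
  rw [Finset.sum_congr rfl h1, ← Finset.mul_sum, vand c n (a + c) b]

lemma moment2 (c : ℝ) (n : ℕ) (a b : ℝ) :
    ∑ k ∈ Finset.range (n + 3),
      (k : ℝ) * ((k : ℝ) - 1) * ((n+2).choose k : ℝ) * rfac a c k * rfac b c (n + 2 - k)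
      = ((n : ℝ) + 2) * ((n : ℝ) + 1) * a * (a + c) * rfac (a + 2*c + b) c n := by
  rw [Finset.sum_range_succ']
  simp only [Nat.cast_zero, zero_mul, add_zero]
  have h1 : ∀ k ∈ Finset.range (n + 2),
      (((k + 1 : ℕ)) : ℝ) * ((((k + 1 : ℕ)) : ℝ) - 1) * ((n+2).choose (k+1) : ℝ)
          * rfac a c (k+1) * rfac b c (n + 2 - (k+1))
      = ((n:ℝ) + 2) * a * ((k : ℝ) * ((n+1).choose k : ℝ) * rfac (a + c) c k * rfac b c (n + 1 - k)) := by
    intro k _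
    have e : n + 2 - (k + 1) = n + 1 - k := by omega
    rw [e, rfac_shift a c k]
    have hc := cast_choose_succ (n+1) k
    push_cast at hc ⊢
    linear_combination ((k:ℝ) * a * rfac (a + c) c k * rfac b c (n + 1 - k)) * hc
  rw [Finset.sum_congr rfl h1, ← Finset.mul_sum, moment1 c n (a + c) b]
  rw [show a + c + c + b = a + 2*c + b by ring]
  ring

lemma sum_w (c x : ℝ) (N : ℕ) :
    ∑ k ∈ Finset.range (N + 3),
      ((N+2).choose k : ℝ) * rfac x c k * rfac (1 - x) c (N + 2 - k) = rfac 1 c (N + 2) := by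
  have h := vand c (N + 2) x (1 - x)
  rw [show x + (1 - x) = (1:ℝ) by ring] at h
  exact h

lemma rfac_one_eq (c : ℝ) (N : ℕ) : rfac 1 c (N + 2) = (1 + c) * rfac (1 + 2*c) c N := by
  rw [rfac_shift, rfac_shift, show (1:ℝ) + c + c = 1 + 2*c by ring]
  ring

lemma var_id (c x : ℝ) (N : ℕ) :
    ∑ k ∈ Finset.range (N + 3),
      ((N+2).choose k : ℝ) * rfac x c k * rfac (1 - x) c (N + 2 - k)
        * ((k : ℝ) / ((N : ℝ) + 2) - x)^2
    = rfac (1 + 2*c) c N * (x * (1 - x) * (1 + ((N : ℝ) + 2) * c) / ((N : ℝ) + 2)) := by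
  have hn : ((N : ℝ) + 2) ≠ 0 := by positivity
  have h1 : ∀ k ∈ Finset.range (N + 3),
      ((N+2).choose k : ℝ) * rfac x c k * rfac (1 - x) c (N + 2 - k)
        * ((k : ℝ) / ((N : ℝ) + 2) - x)^2
      = ((k : ℝ) * ((k : ℝ) - 1) * ((N+2).choose k : ℝ) * rfac x c k * rfac (1 - x) c (N + 2 - k))
          * (1 / ((N : ℝ) + 2)^2)
        + ((k : ℝ) * ((N+2).choose k : ℝ) * rfac x c k * rfac (1 - x) c (N + 2 - k))
          * ((1 - 2 * ((N : ℝ) + 2) * x) / ((N : ℝ) + 2)^2)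
        + (((N+2).choose k : ℝ) * rfac x c k * rfac (1 - x) c (N + 2 - k)) * x^2 := by
    intro k _
    field_simp
    ring
  rw [Finset.sum_congr rfl h1, Finset.sum_add_distrib, Finset.sum_add_distrib,
    ← Finset.sum_mul, ← Finset.sum_mul, ← Finset.sum_mul]
  rw [moment2 c N x (1 - x)]
  have hm1 := moment1 c (N + 1) x (1 - x)
  push_cast at hm1
  rw [show (N : ℝ) + 1 + 1 = (N : ℝ) + 2 by ring] at hm1
  rw [hm1]
  rw [sum_w c x N]
  rw [show x + 2*c + (1 - x) = 1 + 2*c by ring, show x + c + (1 - x) = 1 + c by ring]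
  rw [rfac_one_eq, rfac_shift, show (1:ℝ) + c + c = 1 + 2*c by ring]
  field_simp
  ring

lemma modulus_bddAbove (f : ℝ → ℝ) (hf : ContinuousOn f (Set.Icc (0:ℝ) 1)) (δ : ℝ) :
    BddAbove {d : ℝ | ∃ u ∈ Set.Icc (0:ℝ) 1, ∃ v ∈ Set.Icc (0:ℝ) 1, |u - v| ≤ δ ∧ d = |f u - f v|} := by
  obtain ⟨C, hC⟩ := (isCompact_Icc (a := (0:ℝ)) (b := 1)).exists_bound_of_continuousOn hf
  refine ⟨C + C, ?_⟩
  rintro d ⟨u, hu, v, hv, -, rfl⟩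
  calc |f u - f v| ≤ |f u| + |f v| := abs_sub _ _
    _ ≤ C + C := add_le_add (hC u hu) (hC v hv)

lemma modulus_le (f : ℝ → ℝ) (hf : ContinuousOn f (Set.Icc (0:ℝ) 1)) {δ u v : ℝ}
    (hu : u ∈ Set.Icc (0:ℝ) 1) (hv : v ∈ Set.Icc (0:ℝ) 1) (h : |u - v| ≤ δ) :
    |f u - f v| ≤ modulus f 0 1 δ :=
  le_csSup (modulus_bddAbove f hf δ) ⟨u, hu, v, hv, h, rfl⟩

lemma modulus_nonneg (f : ℝ → ℝ) (hf : ContinuousOn f (Set.Icc (0:ℝ) 1)) {δ : ℝ}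
    (hδ : 0 ≤ δ) : 0 ≤ modulus f 0 1 δ := by
  have h := modulus_le f hf (u := 0) (v := 0) (by simp) (by simp) (by simpa using hδ)
  simpa using h

lemma modulus_chain (f : ℝ → ℝ) (hf : ContinuousOn f (Set.Icc (0:ℝ) 1)) {δ : ℝ}
    (hδ : 0 < δ) :
    ∀ (N : ℕ) (u v : ℝ), u ∈ Set.Icc (0:ℝ) 1 → v ∈ Set.Icc (0:ℝ) 1 →
      |u - v| ≤ N * δ → |f u - f v| ≤ N * modulus f 0 1 δ := by
  intro N
  induction N with
  | zero =>
    intro u v hu hv h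
    simp only [Nat.cast_zero, zero_mul] at h ⊢
    have huv : u = v := by
      have h0 := abs_nonneg (u - v)
      have h1 : |u - v| = 0 := le_antisymm h h0
      have h2 := abs_eq_zero.mp h1
      linarith [sub_eq_zero.mp h2]
    simp [huv]
  | succ N ih =>
    intro u v hu hv h
    have hN1 : (0:ℝ) < (N:ℝ) + 1 := by positivity
    set w : ℝ := ((N:ℝ) * u + v) / ((N:ℝ) + 1) with hwdef
    have hw : w ∈ Set.Icc (0:ℝ) 1 := by
      obtain ⟨hu0, hu1⟩ := hu; obtain ⟨hv0, hv1⟩ := hv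
      constructor
      · apply div_nonneg _ hN1.le; positivity
      · rw [div_le_one hN1]; nlinarith
    have huw : u - w = (u - v) / ((N:ℝ) + 1) := by
      rw [hwdef]; field_simp; ring
    have hwv : w - v = (N:ℝ) * (u - v) / ((N:ℝ) + 1) := by
      rw [hwdef]; field_simp; ring
    have hcast : ((N + 1 : ℕ):ℝ) = (N:ℝ) + 1 := by push_cast; ring
    rw [hcast] at h
    have h1 : |u - w| ≤ δ := by
      rw [huw, abs_div, abs_of_pos hN1, div_le_iff₀ hN1]
      nlinarith
    have h2 : |w - v| ≤ (N:ℝ) * δ := by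
      rw [hwv, abs_div, abs_of_pos hN1, abs_mul, abs_of_nonneg (Nat.cast_nonneg N),
        div_le_iff₀ hN1]
      nlinarith [abs_nonneg (u - v), Nat.cast_nonneg (α := ℝ) N]
    calc |f u - f v| = |(f u - f w) + (f w - f v)| := by ring_nf
      _ ≤ |f u - f w| + |f w - f v| := abs_add_le _ _
      _ ≤ modulus f 0 1 δ + (N:ℝ) * modulus f 0 1 δ :=
          add_le_add (modulus_le f hf hu hw h1) (ih w v hw hv h2)
      _ = ((N + 1 : ℕ):ℝ) * modulus f 0 1 δ := by push_cast; ring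

lemma modulus_pointwise (f : ℝ → ℝ) (hf : ContinuousOn f (Set.Icc (0:ℝ) 1)) {δ u v : ℝ}
    (hδ : 0 < δ) (hu : u ∈ Set.Icc (0:ℝ) 1) (hv : v ∈ Set.Icc (0:ℝ) 1) :
    |f u - f v| ≤ (1 + (u - v)^2 / δ^2) * modulus f 0 1 δ := by
  have hω := modulus_nonneg f hf hδ.le
  by_cases hc : |u - v| ≤ δ
  · calc |f u - f v| ≤ modulus f 0 1 δ := modulus_le f hf hu hv hc
      _ ≤ (1 + (u - v)^2 / δ^2) * modulus f 0 1 δ := by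
          apply le_mul_of_one_le_left hω
          have : 0 ≤ (u - v)^2 / δ^2 := by positivity
          linarith
  · push_neg at hc
    set N : ℕ := ⌈|u - v| / δ⌉₊ with hN
    have hpos : 0 ≤ |u - v| / δ := by positivity
    have h1 : |u - v| ≤ (N:ℝ) * δ := by
      calc |u - v| = (|u - v| / δ) * δ := by field_simp
        _ ≤ (N:ℝ) * δ := mul_le_mul_of_nonneg_right (Nat.le_ceil _) hδ.le
    have h2 : (N:ℝ) < |u - v| / δ + 1 := Nat.ceil_lt_add_one hpos
    have hl1 : (1:ℝ) < |u - v| / δ := (one_lt_div hδ).mpr hc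
    have h3 : (N:ℝ) ≤ 1 + (u - v)^2 / δ^2 := by
      have hq : |u - v| / δ ≤ (|u - v| / δ)^2 := by nlinarith
      have he : (|u - v| / δ)^2 = (u - v)^2 / δ^2 := by
        rw [div_pow, sq_abs]
      nlinarith
    calc |f u - f v| ≤ (N:ℝ) * modulus f 0 1 δ := modulus_chain f hf hδ N u v hu hv h1
      _ ≤ (1 + (u - v)^2 / δ^2) * modulus f 0 1 δ := mul_le_mul_of_nonneg_right h3 hω

set_option maxHeartbeats 2000000 in
theorem Rop_popoviciu (f : ℝ → ℝ) (hf : ContinuousOn f (Set.Icc (0 : ℝ) 1))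
    (n : ℕ) (hn : 1 < n) (x : ℝ) (hx : x ∈ Set.Icc (0 : ℝ) 1) :
    |Rop n f x - f x| ≤ (31 / 27) * modulus f 0 1 ((n : ℝ) ^ (-(1 : ℝ) / 2)) := by
  obtain ⟨hx0, hx1⟩ := hx
  obtain ⟨N, rfl⟩ : ∃ N, n = N + 2 := ⟨n - 2, by omega⟩
  simp only [Rop, polyaProb]
  push_cast
  rw [show N + 2 + 1 = N + 3 from rfl]
  simp only [show x + (1 - x) = (1:ℝ) by ring]
  set m : ℝ := min x (1 - x) with hmdef
  set d : ℝ := (N:ℝ) + 2 - 1 with hddef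
  set c : ℝ := -m / d with hcdef
  set δ : ℝ := ((N:ℝ) + 2) ^ (-(1:ℝ) / 2) with hδdef
  set ω : ℝ := modulus f 0 1 δ with hωdef
  have hd : d = (N:ℝ) + 1 := by rw [hddef]; ring
  have hdpos : 0 < d := by rw [hd]; positivity
  have hd1 : (1:ℝ) ≤ d := by
    rw [hd]
    have := Nat.cast_nonneg (α := ℝ) N
    linarith
  have hm0 : 0 ≤ m := le_min hx0 (by linarith)
  have hmx : m ≤ x := min_le_left _ _
  have hmy : m ≤ 1 - x := min_le_right _ _
  have hm2 : m ≤ 1 / 2 := by linarith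
  have hcd : c * d = -m := by rw [hcdef]; field_simp
  have hic : ∀ i : ℕ, i < N + 2 → -m ≤ (i:ℝ) * c := by
    intro i hi
    have hiR : (i:ℝ) ≤ d := by
      rw [hd]
      have h' : i ≤ N + 1 := by omega
      have := (Nat.cast_le (α := ℝ)).mpr h'
      push_cast at this
      linarith
    have h1 : (i:ℝ) * c = -((i:ℝ) * m / d) := by rw [hcdef]; ring
    have h2 : (i:ℝ) * m / d ≤ m := by
      rw [div_le_iff₀ hdpos]
      nlinarith [Nat.cast_nonneg (α := ℝ) i]
    rw [h1]
    linarith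
  have hc1 : 0 < 1 + c := by
    have := hic 1 (by omega)
    push_cast at this
    linarith
  have hWnn : ∀ k : ℕ, k ≤ N + 2 →
      0 ≤ ((N + 2).choose k : ℝ) * rfac x c k * rfac (1 - x) c (N + 2 - k) := by
    intro k hk
    have hA : 0 ≤ rfac x c k := by
      apply rfac_nonneg
      intro i hi
      have := hic i (by omega)
      linarith
    have hB : 0 ≤ rfac (1 - x) c (N + 2 - k) := by
      apply rfac_nonneg
      intro i hi
      have := hic i (by omega)
      linarith
    positivity
  have hD : 0 < rfac 1 c (N + 2) := by
    apply rfac_pos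
    intro i hi
    have := hic i hi
    linarith
  have hP : 0 < rfac (1 + 2 * c) c N := by
    apply rfac_pos
    intro i hi
    have h := hic (i + 2) (by omega)
    push_cast at h
    linarith
  have hD0 : rfac 1 c (N + 2) ≠ 0 := ne_of_gt hD
  have hn2R : ((N:ℝ) + 2) ≠ 0 := by positivity
  have hδpos : 0 < δ := Real.rpow_pos_of_pos (by positivity) _
  have hω0 : 0 ≤ ω := modulus_nonneg f hf hδpos.le
  have hδ2 : δ ^ 2 = ((N:ℝ) + 2)⁻¹ := by
    rw [hδdef, ← Real.rpow_natCast (((N:ℝ) + 2) ^ (-(1:ℝ) / 2)) 2,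
      ← Real.rpow_mul (by positivity : (0:ℝ) ≤ (N:ℝ) + 2),
      show (-(1:ℝ) / 2) * ((2:ℕ):ℝ) = -1 by push_cast; ring,
      Real.rpow_neg_one]
  have hsum1 : ∑ k ∈ Finset.range (N + 3),
      ((N + 2).choose k : ℝ) * rfac x c k * rfac (1 - x) c (N + 2 - k) / rfac 1 c (N + 2)
      = 1 := by
    rw [← Finset.sum_div, sum_w c x N, div_self hD0]
  have hsplit : (∑ k ∈ Finset.range (N + 3),
        ((N + 2).choose k : ℝ) * rfac x c k * rfac (1 - x) c (N + 2 - k) / rfac 1 c (N + 2)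
          * f ((k:ℝ) / ((N:ℝ) + 2))) - f x
      = ∑ k ∈ Finset.range (N + 3),
        ((N + 2).choose k : ℝ) * rfac x c k * rfac (1 - x) c (N + 2 - k) / rfac 1 c (N + 2)
          * (f ((k:ℝ) / ((N:ℝ) + 2)) - f x) := by
    simp only [mul_sub]
    rw [Finset.sum_sub_distrib, ← Finset.sum_mul, hsum1, one_mul]
  have hfrac : x * (1 - x) * (1 + ((N:ℝ) + 2) * c) / (1 + c) ≤ 4 / 27 := by
    rw [div_le_iff₀ hc1]
    have hxx : x * (1 - x) = m * (1 - m) := by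
      rcases min_cases x (1 - x) with ⟨h1, h2⟩ | ⟨h1, h2⟩ <;> rw [hmdef, h1] <;> ring
    have hkey : x * (1 - x) * (1 + ((N:ℝ) + 2) * c) * d ≤ 4 / 27 * (1 + c) * d := by
      have hNd : (N:ℝ) + 2 = d + 1 := by rw [hd]; ring
      have e1 : x * (1 - x) * (1 + ((N:ℝ) + 2) * c) * d = m * (1 - m) * (d - (d + 1) * m) := by
        rw [hxx, hNd]
        linear_combination (m * (1 - m) * (d + 1)) * hcd
      have e2 : 4 / 27 * (1 + c) * d = 4 / 27 * (d - m) := by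
        linear_combination (4 / 27 : ℝ) * hcd
      rw [e1, e2]
      have s1 : d - (d + 1) * m ≤ (1 - m) * (d - m) := by nlinarith [sq_nonneg m]
      have s2 : m * (1 - m) * (d - (d + 1) * m) ≤ m * (1 - m) * ((1 - m) * (d - m)) := by
        apply mul_le_mul_of_nonneg_left s1
        nlinarith
      have s3 : m * (1 - m) ^ 2 ≤ 4 / 27 := by
        nlinarith [mul_nonneg (mul_nonneg (sq_nonneg (3 * m - 1))
          (by linarith : (0:ℝ) ≤ 4 - 3 * m)) (by norm_num : (0:ℝ) ≤ 1 / 27)]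
      have s4 : m * (1 - m) ^ 2 * (d - m) ≤ 4 / 27 * (d - m) := by
        apply mul_le_mul_of_nonneg_right s3
        linarith
      nlinarith [s2, s4]
    exact le_of_mul_le_mul_right hkey hdpos
  have hbig : ∑ k ∈ Finset.range (N + 3),
        ((N + 2).choose k : ℝ) * rfac x c k * rfac (1 - x) c (N + 2 - k) / rfac 1 c (N + 2)
          * ((1 + ((k:ℝ) / ((N:ℝ) + 2) - x) ^ 2 / δ ^ 2) * ω)
      = ω + (x * (1 - x) * (1 + ((N:ℝ) + 2) * c) / (1 + c)) * ω := by
    have hterm : ∀ k ∈ Finset.range (N + 3),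
        ((N + 2).choose k : ℝ) * rfac x c k * rfac (1 - x) c (N + 2 - k) / rfac 1 c (N + 2)
          * ((1 + ((k:ℝ) / ((N:ℝ) + 2) - x) ^ 2 / δ ^ 2) * ω)
        = (((N + 2).choose k : ℝ) * rfac x c k * rfac (1 - x) c (N + 2 - k))
            * (ω / rfac 1 c (N + 2))
          + (((N + 2).choose k : ℝ) * rfac x c k * rfac (1 - x) c (N + 2 - k)
              * ((k:ℝ) / ((N:ℝ) + 2) - x) ^ 2)
            * (ω * ((N:ℝ) + 2) / rfac 1 c (N + 2)) := by
      intro k _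
      rw [hδ2]
      field_simp
    rw [Finset.sum_congr rfl hterm, Finset.sum_add_distrib, ← Finset.sum_mul,
      ← Finset.sum_mul, sum_w c x N, var_id c x N, rfac_one_eq c N]
    have hPc : (1 + c) * rfac (1 + 2 * c) c N ≠ 0 := by positivity
    have hP0 : rfac (1 + 2 * c) c N ≠ 0 := ne_of_gt hP
    field_simp
    ring_nf at hP0 ⊢
    field_simp
    ring
  calc |(∑ k ∈ Finset.range (N + 3),
        ((N + 2).choose k : ℝ) * rfac x c k * rfac (1 - x) c (N + 2 - k) / rfac 1 c (N + 2)
          * f ((k:ℝ) / ((N:ℝ) + 2))) - f x|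
      = |∑ k ∈ Finset.range (N + 3),
          ((N + 2).choose k : ℝ) * rfac x c k * rfac (1 - x) c (N + 2 - k) / rfac 1 c (N + 2)
            * (f ((k:ℝ) / ((N:ℝ) + 2)) - f x)| := by rw [hsplit]
    _ ≤ ∑ k ∈ Finset.range (N + 3),
          |((N + 2).choose k : ℝ) * rfac x c k * rfac (1 - x) c (N + 2 - k) / rfac 1 c (N + 2)
            * (f ((k:ℝ) / ((N:ℝ) + 2)) - f x)| := Finset.abs_sum_le_sum_abs _ _
    _ ≤ ∑ k ∈ Finset.range (N + 3),
          ((N + 2).choose k : ℝ) * rfac x c k * rfac (1 - x) c (N + 2 - k) / rfac 1 c (N + 2)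
            * ((1 + ((k:ℝ) / ((N:ℝ) + 2) - x) ^ 2 / δ ^ 2) * ω) := by
        apply Finset.sum_le_sum
        intro k hk
        have hk2 : k ≤ N + 2 := by
          have := Finset.mem_range.mp hk
          omega
        have ha : 0 ≤ ((N + 2).choose k : ℝ) * rfac x c k * rfac (1 - x) c (N + 2 - k)
            / rfac 1 c (N + 2) := div_nonneg (hWnn k hk2) hD.le
        rw [abs_mul, abs_of_nonneg ha]
        apply mul_le_mul_of_nonneg_left _ ha
        apply modulus_pointwise f hf hδpos _ ⟨hx0, hx1⟩
        constructor
        · positivity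
        · rw [div_le_one (by positivity)]
          have := (Nat.cast_le (α := ℝ)).mpr hk2
          push_cast at this
          linarith
    _ = ω + (x * (1 - x) * (1 + ((N:ℝ) + 2) * c) / (1 + c)) * ω := hbig
    _ ≤ ω + (4 / 27) * ω := by
        have := mul_le_mul_of_nonneg_right hfrac hω0
        linarith
    _ = 31 / 27 * ω := by ring
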